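/- Let n ≥ 1, σ ∈ ℂ with |σ| = 1, and ε ∈ {1, −1}. Let L⁰, L : ℂ → Matrix (Fin n) (Fin n) ℂ have polynomial entries and both satisfy the reality condition L(ε·conj(λ)) = σ·(L(λ))ᴴ for all λ ∈ ℂ, where ᴴ denotes conjugate transpose. Suppose Q is an invertible complex n×n matrix such that L(λ) = Q⁻¹·L⁰(λ)·Q for all λ ∈ ℂ. Then the matrix Q·Qᴴ commutes with L⁰(λ) for every λ ∈ ℂ. -/

import Mathlib

open Matrix

/-- If two matrix polynomials `L⁰, L` satisfying the reality condition
`L(ε·conj λ) = σ·L(λ)ᴴ` are conjugate by an invertible matrix `Q`, then `Q·Qᴴ` commutes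
with `L⁰(λ)` for every `λ`. -/
theorem statement5 (n : ℕ) (hn : 1 ≤ n) (σ : ℂ) (hσ : ‖σ‖ = 1)
    (ε : ℝ) (hε : ε = 1 ∨ ε = -1)
    (L₀ L : ℂ → Matrix (Fin n) (Fin n) ℂ)
    (hpoly₀ : ∀ i j : Fin n, ∃ p : Polynomial ℂ, ∀ z : ℂ, L₀ z i j = p.eval z)
    (hpoly : ∀ i j : Fin n, ∃ p : Polynomial ℂ, ∀ z : ℂ, L z i j = p.eval z)
    (hreal₀ : ∀ z : ℂ, L₀ ((ε : ℂ) * (starRingEnd ℂ) z) = σ • (L₀ z)ᴴ)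
    (hreal : ∀ z : ℂ, L ((ε : ℂ) * (starRingEnd ℂ) z) = σ • (L z)ᴴ)
    (Q : Matrix (Fin n) (Fin n) ℂ) (hQ : IsUnit Q)
    (hconj : ∀ z : ℂ, L z = Q⁻¹ * L₀ z * Q) :
    ∀ z : ℂ, Q * Qᴴ * L₀ z = L₀ z * (Q * Qᴴ) := by
  have hσ0 : σ ≠ 0 := by
    intro h; rw [h] at hσ; simp at hσ
  have hdet : IsUnit Q.det := (isUnit_iff_isUnit_det Q).mp hQ
  have hdetH : IsUnit Qᴴ.det := by
    rw [Matrix.det_conjTranspose]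
    exact hdet.map (starRingEnd ℂ)
  have hQQi : Q * Q⁻¹ = 1 := mul_nonsing_inv Q hdet
  have hQiQ : Q⁻¹ * Q = 1 := nonsing_inv_mul Q hdet
  have hQH : (Q⁻¹)ᴴ = Qᴴ⁻¹ := conjTranspose_nonsing_inv Q
  have hQHi : Qᴴ⁻¹ * Qᴴ = 1 := nonsing_inv_mul Qᴴ hdetH
  -- key: Q Qᴴ commutes with L₀(z)ᴴ for all z
  have key : ∀ z : ℂ, Q * Qᴴ * (L₀ z)ᴴ = (L₀ z)ᴴ * (Q * Qᴴ) := by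
    intro z
    have h1 : L ((ε : ℂ) * (starRingEnd ℂ) z) = σ • (Q⁻¹ * (L₀ z)ᴴ * Q) := by
      rw [hconj, hreal₀]
      rw [Matrix.mul_smul, Matrix.smul_mul]
    have h2 : L ((ε : ℂ) * (starRingEnd ℂ) z) = σ • (Qᴴ * (L₀ z)ᴴ * Qᴴ⁻¹) := by
      rw [hreal, hconj]
      rw [Matrix.conjTranspose_mul, Matrix.conjTranspose_mul, hQH, Matrix.mul_assoc]
    have h3 : Q⁻¹ * (L₀ z)ᴴ * Q = Qᴴ * (L₀ z)ᴴ * Qᴴ⁻¹ :=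
      smul_right_injective _ hσ0 (h1.symm.trans h2)
    have h4 := congrArg (fun M => Q * M * Qᴴ) h3
    simp only [← Matrix.mul_assoc] at h4
    rw [hQQi, Matrix.one_mul, Matrix.mul_assoc _ Qᴴ⁻¹ Qᴴ, hQHi, Matrix.mul_one] at h4
    rw [← Matrix.mul_assoc]
    exact h4.symm
  intro w
  set z : ℂ := (ε : ℂ) * (starRingEnd ℂ) w with hz
  have hεz : (ε : ℂ) * (starRingEnd ℂ) z = w := by
    rw [hz]
    rcases hε with h | h <;> subst h <;>
      simp [_root_.map_mul, Complex.conj_ofReal, ← mul_assoc] <;> push_cast <;> ring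
  have hw : L₀ w = σ • (L₀ z)ᴴ := by rw [← hεz, hreal₀]
  rw [hw, Matrix.mul_smul, Matrix.smul_mul, key]
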